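/- For p ∈ ℤ, p ≠ 0, define v(p,t) := (t²/(4π)) ∫_0^1 ∑_{q∈ℤ} e^{-(q² + 2(1-ξ)pq + (1-ξ)p²)t} dξ. Then (2π p²/t)·v(p,t) → 1 as t → ∞; i.e., v(p,t) ≃ t/(2π p²) up to exponentially small corrections. -/

import Mathlib

open Real Filter MeasureTheory

lemma ff_summable_exp_neg_int_sq {c : ℝ} (hc : 0 < c) :
    Summable fun q : ℤ => Real.exp (-(c * (q : ℝ) ^ 2)) := by
  have key : Summable fun n : ℕ => Real.exp (-(c * (n : ℝ) ^ 2)) := by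
    refine Summable.of_nonneg_of_le (fun n => (Real.exp_pos _).le) (fun n => ?_)
      (Real.summable_exp_nat_mul_iff.mpr (neg_lt_zero.mpr hc))
    rw [Real.exp_le_exp]
    have h : (n : ℝ) ≤ (n : ℝ) ^ 2 := by
      exact_mod_cast Nat.le_self_pow two_ne_zero n
    nlinarith
  apply Summable.of_nat_of_neg
  · exact key
  · refine key.congr fun n => ?_
    push_cast
    ring_nf

lemma ff_summable_exp_neg_int_sq_add {c : ℝ} (hc : 0 < c) (p : ℤ) :
    Summable fun q : ℤ => Real.exp (-(c * ((q : ℝ) + (p : ℝ)) ^ 2)) := by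
  have h := (ff_summable_exp_neg_int_sq hc).comp_injective (add_left_injective p)
  refine h.congr fun q => ?_
  simp [Function.comp]

lemma ff_integral_exp_aux1 {c : ℝ} (hc : c ≠ 0) :
    ∫ ξ in (0:ℝ)..1, Real.exp (-(ξ * c)) = (1 - Real.exp (-c)) / c := by
  have h : ∀ ξ ∈ Set.uIcc (0:ℝ) 1,
      HasDerivAt (fun x => -Real.exp (-(x * c)) / c) (Real.exp (-(ξ * c))) ξ := by
    intro ξ _
    have h1 : HasDerivAt (fun x : ℝ => -(x * c)) (-c) ξ := by
      exact ((hasDerivAt_id ξ).mul_const c).neg.congr_deriv (by ring)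
    have h2 := (h1.exp).neg.div_const c
    refine h2.congr_deriv ?_
    field_simp
  rw [intervalIntegral.integral_eq_sub_of_hasDerivAt h
    ((by continuity : Continuous fun x : ℝ => Real.exp (-(x * c))).intervalIntegrable 0 1)]
  rw [one_mul, zero_mul, neg_zero, Real.exp_zero]
  field_simp
  ring

lemma ff_integral_exp_aux2 {c : ℝ} (hc : c ≠ 0) :
    ∫ ξ in (0:ℝ)..1, Real.exp (-((1 - ξ) * c)) = (1 - Real.exp (-c)) / c := by
  have h : ∀ ξ ∈ Set.uIcc (0:ℝ) 1,
      HasDerivAt (fun x => Real.exp (-((1 - x) * c)) / c) (Real.exp (-((1 - ξ) * c))) ξ := by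
    intro ξ _
    have h1 : HasDerivAt (fun x : ℝ => -((1 - x) * c)) c ξ := by
      exact (((hasDerivAt_const ξ (1:ℝ)).sub (hasDerivAt_id ξ)).mul_const c).neg.congr_deriv (by ring)
    have h2 := (h1.exp).div_const c
    refine h2.congr_deriv ?_
    field_simp
  rw [intervalIntegral.integral_eq_sub_of_hasDerivAt h
    ((by continuity : Continuous fun x : ℝ => Real.exp (-((1 - x) * c))).intervalIntegrable 0 1)]
  rw [sub_self, zero_mul, neg_zero, Real.exp_zero, sub_zero]
  field_simp

noncomputable def ffG (p : ℤ) (t ξ : ℝ) (q : ℤ) : ℝ :=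
  if q = 0 ∨ q = -p then 0
  else Real.exp (-((q : ℝ) ^ 2 + 2 * (1 - ξ) * (p : ℝ) * q + (1 - ξ) * (p : ℝ) ^ 2) * t)

lemma ff_one_le_sq {q : ℤ} (hq : q ≠ 0) : (1 : ℝ) ≤ (q : ℝ) ^ 2 := by
  have h : (1 : ℤ) ≤ q ^ 2 := by
    rcases lt_or_gt_of_ne hq with h | h
    · nlinarith
    · nlinarith
  exact_mod_cast h

lemma ff_exp_le (p : ℤ) {t ξ : ℝ} (ht : 0 ≤ t) (hξ0 : 0 ≤ ξ) (hξ1 : ξ ≤ 1) (q : ℤ) :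
    Real.exp (-((q : ℝ) ^ 2 + 2 * (1 - ξ) * (p : ℝ) * q + (1 - ξ) * (p : ℝ) ^ 2) * t)
      ≤ Real.exp (-(t * (q : ℝ) ^ 2)) + Real.exp (-(t * ((q : ℝ) + (p : ℝ)) ^ 2)) := by
  rcases le_total ((q : ℝ) ^ 2) (((q : ℝ) + (p : ℝ)) ^ 2) with h | h
  · have h1 : Real.exp (-((q : ℝ) ^ 2 + 2 * (1 - ξ) * (p : ℝ) * q + (1 - ξ) * (p : ℝ) ^ 2) * t)
        ≤ Real.exp (-(t * (q : ℝ) ^ 2)) := by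
      rw [Real.exp_le_exp]
      nlinarith [mul_nonneg (mul_nonneg ht (by linarith : (0:ℝ) ≤ 1 - ξ))
        (sub_nonneg.mpr h)]
    linarith [Real.exp_pos (-(t * ((q : ℝ) + (p : ℝ)) ^ 2))]
  · have h1 : Real.exp (-((q : ℝ) ^ 2 + 2 * (1 - ξ) * (p : ℝ) * q + (1 - ξ) * (p : ℝ) ^ 2) * t)
        ≤ Real.exp (-(t * ((q : ℝ) + (p : ℝ)) ^ 2)) := by
      rw [Real.exp_le_exp]
      nlinarith [mul_nonneg (mul_nonneg ht hξ0) (sub_nonneg.mpr h)]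
    linarith [Real.exp_pos (-(t * (q : ℝ) ^ 2))]

lemma ff_summable_integrand (p : ℤ) {t ξ : ℝ} (ht : 0 < t) (hξ0 : 0 ≤ ξ) (hξ1 : ξ ≤ 1) :
    Summable fun q : ℤ =>
      Real.exp (-((q : ℝ) ^ 2 + 2 * (1 - ξ) * (p : ℝ) * q + (1 - ξ) * (p : ℝ) ^ 2) * t) :=
  Summable.of_nonneg_of_le (fun q => (Real.exp_pos _).le)
    (fun q => ff_exp_le p ht.le hξ0 hξ1 q)
    ((ff_summable_exp_neg_int_sq ht).add (ff_summable_exp_neg_int_sq_add ht p))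

lemma ffG_nonneg (p : ℤ) (t ξ : ℝ) (q : ℤ) : 0 ≤ ffG p t ξ q := by
  unfold ffG; split
  · exact le_refl 0
  · exact (Real.exp_pos _).le

lemma ffG_le_exp (p : ℤ) (t ξ : ℝ) (q : ℤ) :
    ffG p t ξ q ≤
      Real.exp (-((q : ℝ) ^ 2 + 2 * (1 - ξ) * (p : ℝ) * q + (1 - ξ) * (p : ℝ) ^ 2) * t) := by
  unfold ffG; split
  · exact (Real.exp_pos _).le
  · exact le_refl _

lemma ffG_summable (p : ℤ) {t ξ : ℝ} (ht : 0 < t) (hξ0 : 0 ≤ ξ) (hξ1 : ξ ≤ 1) :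
    Summable (ffG p t ξ) :=
  Summable.of_nonneg_of_le (ffG_nonneg p t ξ) (ffG_le_exp p t ξ)
    (ff_summable_integrand p ht hξ0 hξ1)

lemma ff_tsum_split (p : ℤ) (hp : p ≠ 0) {t ξ : ℝ} (ht : 0 < t) (hξ0 : 0 ≤ ξ) (hξ1 : ξ ≤ 1) :
    (∑' q : ℤ, Real.exp (-((q : ℝ) ^ 2 + 2 * (1 - ξ) * (p : ℝ) * q + (1 - ξ) * (p : ℝ) ^ 2) * t))
      = Real.exp (-((1 - ξ) * ((p : ℝ) ^ 2 * t))) + Real.exp (-(ξ * ((p : ℝ) ^ 2 * t)))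
        + ∑' q : ℤ, ffG p t ξ q := by
  set f : ℤ → ℝ := fun q =>
    Real.exp (-((q : ℝ) ^ 2 + 2 * (1 - ξ) * (p : ℝ) * q + (1 - ξ) * (p : ℝ) ^ 2) * t) with hf_def
  have hf : Summable f := ff_summable_integrand p ht hξ0 hξ1
  have hf1 : Summable fun q : ℤ => if q = 0 then 0 else f q :=
    Summable.of_nonneg_of_le (fun q => by split <;> positivity)
      (fun q => by split <;> simp [hf_def, (Real.exp_pos _).le]) hf
  rw [Summable.tsum_eq_add_tsum_ite hf 0, Summable.tsum_eq_add_tsum_ite hf1 (-p)]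
  have hne : (-p : ℤ) ≠ 0 := neg_ne_zero.mpr hp
  rw [if_neg hne]
  have e0 : f 0 = Real.exp (-((1 - ξ) * ((p : ℝ) ^ 2 * t))) := by
    simp only [hf_def, Int.cast_zero]
    congr 1
    ring
  have e1 : f (-p) = Real.exp (-(ξ * ((p : ℝ) ^ 2 * t))) := by
    simp only [hf_def, Int.cast_neg]
    congr 1
    ring
  have e2 : (∑' q : ℤ, if q = -p then 0 else if q = 0 then 0 else f q)
      = ∑' q : ℤ, ffG p t ξ q := by
    refine tsum_congr fun q => ?_
    by_cases h1 : q = -p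
    · simp [h1, ffG]
    · by_cases h2 : q = 0
      · simp [h1, h2, ffG]
      · simp [h1, h2, ffG, hf_def]
  rw [e0, e1, e2]
  ring

lemma ffR_continuousOn (p : ℤ) {t : ℝ} (ht : 0 < t) :
    ContinuousOn (fun ξ : ℝ => ∑' q : ℤ, ffG p t ξ q) (Set.Icc (0:ℝ) 1) := by
  refine continuousOn_tsum (f := fun q ξ => ffG p t ξ q)
    (u := fun q : ℤ => Real.exp (-(t * (q : ℝ) ^ 2)) + Real.exp (-(t * ((q : ℝ) + (p : ℝ)) ^ 2)))
    (fun q => ?_) ((ff_summable_exp_neg_int_sq ht).add (ff_summable_exp_neg_int_sq_add ht p))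
    (fun q ξ hξ => ?_)
  · unfold ffG
    by_cases h : q = 0 ∨ q = -p
    · simp only [if_pos h]
      exact continuousOn_const
    · simp only [if_neg h]
      exact (by continuity : Continuous fun ξ : ℝ =>
        Real.exp (-((q : ℝ) ^ 2 + 2 * (1 - ξ) * (p : ℝ) * q + (1 - ξ) * (p : ℝ) ^ 2) * t)).continuousOn
  · rw [Real.norm_of_nonneg (ffG_nonneg p t ξ q)]
    exact (ffG_le_exp p t ξ q).trans (ff_exp_le p ht.le hξ.1 hξ.2 q)

lemma ffG_le_bound (p : ℤ) {t ξ : ℝ} (ht : 1 ≤ t) (hξ0 : 0 ≤ ξ) (hξ1 : ξ ≤ 1) (q : ℤ) :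
    ffG p t ξ q ≤ Real.exp (1 - t) *
      (Real.exp (-((q : ℝ) ^ 2)) + Real.exp (-(((q : ℝ) + (p : ℝ)) ^ 2))) := by
  unfold ffG
  split
  · positivity
  · rename_i hq
    push_neg at hq
    obtain ⟨hq0, hqp⟩ := hq
    have hq1 : (1 : ℝ) ≤ (q : ℝ) ^ 2 := ff_one_le_sq hq0
    have hqp1 : (1 : ℝ) ≤ ((q : ℝ) + (p : ℝ)) ^ 2 := by
      have := ff_one_le_sq (q := q + p) (by omega)
      push_cast at this
      convert this using 2
    set E : ℝ := (q : ℝ) ^ 2 + 2 * (1 - ξ) * (p : ℝ) * q + (1 - ξ) * (p : ℝ) ^ 2 with hE_def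
    have hE1 : 1 ≤ E := by
      have hEe : E = ξ * (q : ℝ) ^ 2 + (1 - ξ) * ((q : ℝ) + (p : ℝ)) ^ 2 := by
        rw [hE_def]; ring
      rw [hEe]
      nlinarith [mul_nonneg hξ0 (sub_nonneg.mpr hq1),
        mul_nonneg (by linarith : (0:ℝ) ≤ 1 - ξ) (sub_nonneg.mpr hqp1)]
    rcases le_total ((q : ℝ) ^ 2) (((q : ℝ) + (p : ℝ)) ^ 2) with h | h
    · have hEq : (q : ℝ) ^ 2 ≤ E := by
        have hEe : E = ξ * (q : ℝ) ^ 2 + (1 - ξ) * ((q : ℝ) + (p : ℝ)) ^ 2 := by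
          rw [hE_def]; ring
        nlinarith [mul_nonneg (by linarith : (0:ℝ) ≤ 1 - ξ) (sub_nonneg.mpr h)]
      have step : Real.exp (-E * t) ≤ Real.exp ((1 - t) + -((q : ℝ) ^ 2)) := by
        rw [Real.exp_le_exp]
        nlinarith [mul_nonneg (sub_nonneg.mpr hE1) (sub_nonneg.mpr ht)]
      refine step.trans ?_
      rw [Real.exp_add]
      have := (Real.exp_pos (-(((q : ℝ) + (p : ℝ)) ^ 2))).le
      nlinarith [Real.exp_pos (1 - t)]
    · have hEq : ((q : ℝ) + (p : ℝ)) ^ 2 ≤ E := by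
        have hEe : E = ξ * (q : ℝ) ^ 2 + (1 - ξ) * ((q : ℝ) + (p : ℝ)) ^ 2 := by
          rw [hE_def]; ring
        nlinarith [mul_nonneg hξ0 (sub_nonneg.mpr h)]
      have step : Real.exp (-E * t) ≤ Real.exp ((1 - t) + -(((q : ℝ) + (p : ℝ)) ^ 2)) := by
        rw [Real.exp_le_exp]
        nlinarith [mul_nonneg (sub_nonneg.mpr hE1) (sub_nonneg.mpr ht)]
      refine step.trans ?_
      rw [Real.exp_add]
      have := (Real.exp_pos (-((q : ℝ) ^ 2))).le
      nlinarith [Real.exp_pos (1 - t)]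

lemma ff_K_summable (p : ℤ) :
    Summable fun q : ℤ =>
      Real.exp (-((q : ℝ) ^ 2)) + Real.exp (-(((q : ℝ) + (p : ℝ)) ^ 2)) := by
  have h1 := ff_summable_exp_neg_int_sq one_pos
  have h2 := ff_summable_exp_neg_int_sq_add one_pos p
  simp only [one_mul] at h1 h2
  exact h1.add h2

lemma ffR_le_bound (p : ℤ) {t ξ : ℝ} (ht : 1 ≤ t) (hξ0 : 0 ≤ ξ) (hξ1 : ξ ≤ 1) :
    (∑' q : ℤ, ffG p t ξ q) ≤ Real.exp (1 - t) *
      ∑' q : ℤ, (Real.exp (-((q : ℝ) ^ 2)) + Real.exp (-(((q : ℝ) + (p : ℝ)) ^ 2))) := by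
  rw [← tsum_mul_left]
  exact Summable.tsum_le_tsum (fun q => ffG_le_bound p ht hξ0 hξ1 q)
    (ffG_summable p (by linarith) hξ0 hξ1) ((ff_K_summable p).mul_left _)

/-- Large-`t` asymptotics of the second-order form-factor on the circle: for `p ≠ 0`,
with `v(p,t) = (t²/(4π)) ∫_0^1 ∑_{q∈ℤ} e^{-(q²+2(1-ξ)pq+(1-ξ)p²)t} dξ`, one has
`(2π p²/t)·v(p,t) → 1` as `t → ∞`. -/
theorem form_factor_large_t (p : ℤ) (hp : p ≠ 0) (v : ℤ → ℝ → ℝ)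
    (hv : ∀ t : ℝ, 0 < t → v p t = (t ^ 2 / (4 * π)) *
      ∫ ξ in (0:ℝ)..1, ∑' q : ℤ,
        Real.exp (-((q : ℝ) ^ 2 + 2 * (1 - ξ) * (p : ℝ) * q + (1 - ξ) * (p : ℝ) ^ 2) * t)) :
    Tendsto (fun t : ℝ => (2 * π * (p : ℝ) ^ 2 / t) * v p t) atTop (nhds 1) := by
  have hpR : ((p : ℝ)) ≠ 0 := Int.cast_ne_zero.mpr hp
  have hP : (0 : ℝ) < (p : ℝ) ^ 2 := by positivity
  set K : ℝ := ∑' q : ℤ, (Real.exp (-((q : ℝ) ^ 2)) + Real.exp (-(((q : ℝ) + (p : ℝ)) ^ 2)))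
    with hK_def
  have hK0 : 0 ≤ K := tsum_nonneg fun q => by positivity
  -- interval integrability of the remainder
  have hiR : ∀ t : ℝ, 0 < t →
      IntervalIntegrable (fun ξ : ℝ => ∑' q : ℤ, ffG p t ξ q) volume 0 1 := by
    intro t ht
    refine ContinuousOn.intervalIntegrable ?_
    rw [Set.uIcc_of_le zero_le_one]
    exact ffR_continuousOn p ht
  have hRnn : ∀ t : ℝ, (0:ℝ) ≤ ∫ ξ in (0:ℝ)..1, ∑' q : ℤ, ffG p t ξ q := fun t =>
    intervalIntegral.integral_nonneg zero_le_one fun ξ _ => tsum_nonneg (ffG_nonneg p t ξ)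
  have hRub : ∀ t : ℝ, 1 ≤ t →
      (∫ ξ in (0:ℝ)..1, ∑' q : ℤ, ffG p t ξ q) ≤ Real.exp (1 - t) * K := by
    intro t ht
    calc (∫ ξ in (0:ℝ)..1, ∑' q : ℤ, ffG p t ξ q)
        ≤ ∫ _ξ in (0:ℝ)..1, Real.exp (1 - t) * K := by
          refine intervalIntegral.integral_mono_on zero_le_one (hiR t (by linarith))
            intervalIntegrable_const (fun ξ hξ => ffR_le_bound p ht hξ.1 hξ.2)
      _ = Real.exp (1 - t) * K := by simp
  -- main limit for the explicit expression
  have main : Tendsto (fun t : ℝ => (1 - Real.exp (-((p : ℝ) ^ 2 * t))) +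
      ((p : ℝ) ^ 2 * t / 2) * ∫ ξ in (0:ℝ)..1, ∑' q : ℤ, ffG p t ξ q) atTop (nhds 1) := by
    have t1 : Tendsto (fun t : ℝ => 1 - Real.exp (-((p : ℝ) ^ 2 * t))) atTop (nhds 1) := by
      have h := (Real.tendsto_exp_neg_atTop_nhds_zero).comp
        (Tendsto.const_mul_atTop hP tendsto_id)
      have := (tendsto_const_nhds (x := (1:ℝ)) (f := atTop)).sub h
      simpa [Function.comp] using this
    have tB : Tendsto (fun t : ℝ => ((p : ℝ) ^ 2 * t / 2) * (Real.exp (1 - t) * K))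
        atTop (nhds 0) := by
      have h := (tendsto_pow_mul_exp_neg_atTop_nhds_zero 1).const_mul
        ((p : ℝ) ^ 2 * K * Real.exp 1 / 2)
      rw [mul_zero] at h
      refine h.congr fun t => ?_
      rw [show (1:ℝ) - t = 1 + -t by ring, Real.exp_add]
      ring
    have t2 : Tendsto (fun t : ℝ =>
        ((p : ℝ) ^ 2 * t / 2) * ∫ ξ in (0:ℝ)..1, ∑' q : ℤ, ffG p t ξ q) atTop (nhds 0) := by
      refine tendsto_of_tendsto_of_tendsto_of_le_of_le' tendsto_const_nhds tB ?_ ?_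
      · filter_upwards [eventually_ge_atTop (1:ℝ)] with t ht
        have := hRnn t
        have h2 : (0:ℝ) ≤ (p : ℝ) ^ 2 * t / 2 := by nlinarith
        positivity
      · filter_upwards [eventually_ge_atTop (1:ℝ)] with t ht
        have h2 : (0:ℝ) ≤ (p : ℝ) ^ 2 * t / 2 := by nlinarith
        exact mul_le_mul_of_nonneg_left (hRub t ht) h2
    simpa using t1.add t2
  -- eventual equality
  refine main.congr' ?_
  filter_upwards [eventually_ge_atTop (1:ℝ)] with t ht
  have ht0 : (0:ℝ) < t := by linarith
  have hc : ((p : ℝ) ^ 2 * t) ≠ 0 := by positivity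
  rw [hv t ht0]
  have hsplit : (∫ ξ in (0:ℝ)..1, ∑' q : ℤ,
        Real.exp (-((q : ℝ) ^ 2 + 2 * (1 - ξ) * (p : ℝ) * q + (1 - ξ) * (p : ℝ) ^ 2) * t))
      = ∫ ξ in (0:ℝ)..1, (Real.exp (-((1 - ξ) * ((p : ℝ) ^ 2 * t)))
          + Real.exp (-(ξ * ((p : ℝ) ^ 2 * t))) + ∑' q : ℤ, ffG p t ξ q) := by
    refine intervalIntegral.integral_congr fun ξ hξ => ?_
    rw [Set.uIcc_of_le zero_le_one] at hξ
    exact ff_tsum_split p hp ht0 hξ.1 hξ.2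
  have i1 : IntervalIntegrable (fun ξ : ℝ => Real.exp (-((1 - ξ) * ((p : ℝ) ^ 2 * t))))
      volume 0 1 := (by continuity : Continuous fun ξ : ℝ =>
        Real.exp (-((1 - ξ) * ((p : ℝ) ^ 2 * t)))).intervalIntegrable 0 1
  have i2 : IntervalIntegrable (fun ξ : ℝ => Real.exp (-(ξ * ((p : ℝ) ^ 2 * t))))
      volume 0 1 := (by continuity : Continuous fun ξ : ℝ =>
        Real.exp (-(ξ * ((p : ℝ) ^ 2 * t)))).intervalIntegrable 0 1
  rw [hsplit, intervalIntegral.integral_add (i1.add i2) (hiR t ht0),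
    intervalIntegral.integral_add i1 i2, ff_integral_exp_aux2 hc, ff_integral_exp_aux1 hc]
  have hπ : π ≠ 0 := Real.pi_ne_zero
  field_simp
  ring
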